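/- arXiv:2005.12953 — 6 statements merged into one kernel-verified Lean document; each statement's English description precedes it below -/
import Mathlib

section
/- Let k be a field, R = k[x,y,z] with 𝔪 = (x,y,z), let d ≥ 2 be an integer, and let I ⊆ R be the ideal generated by the monomials z·x^i·y^{d−1−i} for 0 ≤ i ≤ d−1, x^{2+j}·y^{d−2−j} for 0 ≤ j ≤ d−2, y^d, and z^d. Then I is 𝔪-primary, and for every integer t ≥ 0 one has dim_k Soc(R/I)_t = (d−2)·[t = d−1] + 1·[t = d] + (d−1)·[t = 2d−3], where [·] equals 1 if the condition holds and 0 otherwise and the contributions are added when the listed degrees coincide. In particular, if d ≥ 3 then every homogeneous polynomial of degree 2d−2 belongs to I. -/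
open MvPolynomial

/-- The maximal graded ideal `𝔪 = (x, y, z)` of `k[x,y,z]`. -/
noncomputable def mIdeal (k : Type*) [Field k] : Ideal (MvPolynomial (Fin 3) k) :=
  Ideal.span (Set.range (X : Fin 3 → MvPolynomial (Fin 3) k))

/-- `dim_k Soc(R/I)_t`, the dimension of the degree-`t` component of the socle
`(I : 𝔪)/I` of `R/I`, realized as the image in `R/I` of the degree-`t` part of the
colon ideal `(I : 𝔪)`. -/
noncomputable def socDimAt {k : Type*} [Field k] (I : Ideal (MvPolynomial (Fin 3) k))
    (t : ℕ) : ℕ :=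
  Module.finrank k
    ↥(Submodule.map (Ideal.Quotient.mkₐ k I).toLinearMap
      ((Submodule.colon I (mIdeal k)).restrictScalars k ⊓ homogeneousSubmodule (Fin 3) k t))

open Finsupp

set_option linter.unnecessarySeqFocus false

/-- membership condition for the monomial ideal I -/
def Pcond (d : ℕ) (m : Fin 3 →₀ ℕ) : Prop :=
  (1 ≤ m 2 ∧ d - 1 ≤ m 0 + m 1) ∨ (2 ≤ m 0 ∧ d ≤ m 0 + m 1) ∨ d ≤ m 1 ∨ d ≤ m 2

lemma Pcond_add {d : ℕ} {m : Fin 3 →₀ ℕ} (h : Pcond d m) (m' : Fin 3 →₀ ℕ) :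
    Pcond d (m' + m) := by
  simp only [Pcond, Finsupp.add_apply] at *
  omega

/-- the candidate monomial-ideal description -/
def Jideal (k : Type*) [Field k] (d : ℕ) : Ideal (MvPolynomial (Fin 3) k) where
  carrier := {p | ∀ m ∈ p.support, Pcond d m}
  add_mem' {p q} hp hq m hm := by
    classical
    rcases Finset.mem_union.mp (MvPolynomial.support_add hm) with h | h
    · exact hp m h
    · exact hq m h
  zero_mem' := by simp
  smul_mem' r p hp := by
    classical
    intro m hm
    rcases Finset.mem_add.mp (MvPolynomial.support_mul r p hm) with ⟨a, ha, b, hb, rfl⟩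
    exact Pcond_add (hp b hb) a

lemma mem_Jideal_iff {k : Type*} [Field k] {d : ℕ} {p : MvPolynomial (Fin 3) k} :
    p ∈ Jideal k d ↔ ∀ m ∈ p.support, Pcond d m := Iff.rfl

section main
variable {k : Type*} [Field k] (d : ℕ)

/-- abbreviation for the generating set -/
def genSet (k : Type*) [Field k] (d : ℕ) : Set (MvPolynomial (Fin 3) k) :=
  ({p | ∃ i ≤ d - 1, p = X 2 * X 0 ^ i * X 1 ^ (d - 1 - i)} ∪
   {p | ∃ j ≤ d - 2, p = X 0 ^ (2 + j) * X 1 ^ (d - 2 - j)} ∪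
   {X 1 ^ d, X 2 ^ d})

lemma gen1_eq (i : ℕ) : (X 2 * X 0 ^ i * X 1 ^ (d - 1 - i) : MvPolynomial (Fin 3) k)
    = monomial (single 0 i + single 1 (d - 1 - i) + single 2 1) 1 := by
  rw [X_pow_eq_monomial, X_pow_eq_monomial, X, monomial_mul, monomial_mul]
  ring_nf
  congr 1
  abel_nf

lemma gen2_eq (j : ℕ) : (X 0 ^ (2 + j) * X 1 ^ (d - 2 - j) : MvPolynomial (Fin 3) k)
    = monomial (single 0 (2 + j) + single 1 (d - 2 - j)) 1 := by
  rw [X_pow_eq_monomial, X_pow_eq_monomial, monomial_mul]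
  ring_nf

end main

section main2
variable {k : Type*} [Field k] {d : ℕ} (hd : 2 ≤ d)

lemma span_genSet_le_J : Ideal.span (genSet k d) ≤ Jideal k d := by
  classical
  rw [Ideal.span_le]
  rintro p ((⟨i, hi, rfl⟩ | ⟨j, hj, rfl⟩) | rfl | rfl) <;>
    intro m hm
  · rw [gen1_eq, support_monomial, if_neg one_ne_zero, Finset.mem_singleton] at hm
    subst hm
    simp only [Pcond, Finsupp.add_apply, Finsupp.single_apply]
    norm_num
    omega
  · rw [gen2_eq, support_monomial, if_neg one_ne_zero, Finset.mem_singleton] at hm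
    subst hm
    simp only [Pcond, Finsupp.add_apply, Finsupp.single_apply]
    norm_num
    omega
  · rw [X_pow_eq_monomial, support_monomial, if_neg one_ne_zero, Finset.mem_singleton] at hm
    subst hm
    simp only [Pcond, Finsupp.single_apply]
    norm_num
  · rw [X_pow_eq_monomial, support_monomial, if_neg one_ne_zero, Finset.mem_singleton] at hm
    subst hm
    simp only [Pcond, Finsupp.single_apply]
    norm_num

end main2

section main3
variable {k : Type*} [Field k] {d : ℕ}

lemma monomial_mem_of_le {s m : Fin 3 →₀ ℕ} (hs : s ≤ m) (c : k)
    (h : (monomial s 1 : MvPolynomial (Fin 3) k) ∈ Ideal.span (genSet k d)) :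
    (monomial m c : MvPolynomial (Fin 3) k) ∈ Ideal.span (genSet k d) := by
  have : (monomial m c : MvPolynomial (Fin 3) k) = monomial (m - s) c * monomial s 1 := by
    rw [monomial_mul, tsub_add_cancel_of_le hs, mul_one]
  rw [this]
  exact Ideal.mul_mem_left _ _ h

lemma monomial_mem_span (hd : 2 ≤ d) {m : Fin 3 →₀ ℕ} (hm : Pcond d m) (c : k) :
    (monomial m c : MvPolynomial (Fin 3) k) ∈ Ideal.span (genSet k d) := by
  rcases hm with ⟨h2, h01⟩ | ⟨h0, h01⟩ | h1 | h2'
  · set i := min (m 0) (d - 1) with hi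
    refine monomial_mem_of_le ?_ c (Ideal.subset_span (Or.inl (Or.inl ⟨i, min_le_right _ _, (gen1_eq d i).symm⟩)))
    intro a
    fin_cases a <;> simp [Finsupp.single_apply] <;> omega
  · set j := min (m 0 - 2) (d - 2) with hj
    refine monomial_mem_of_le ?_ c (Ideal.subset_span (Or.inl (Or.inr ⟨j, min_le_right _ _, (gen2_eq d j).symm⟩)))
    intro a
    fin_cases a <;> simp [Finsupp.single_apply] <;> omega
  · refine monomial_mem_of_le (s := single 1 d) ?_ c ?_
    · intro a
      fin_cases a <;> simp [Finsupp.single_apply] <;> omega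
    · rw [← X_pow_eq_monomial]
      exact Ideal.subset_span (Or.inr (Or.inl rfl))
  · refine monomial_mem_of_le (s := single 2 d) ?_ c ?_
    · intro a
      fin_cases a <;> simp [Finsupp.single_apply] <;> omega
    · rw [← X_pow_eq_monomial]
      exact Ideal.subset_span (Or.inr (Or.inr rfl))

lemma span_eq_J (hd : 2 ≤ d) : Ideal.span (genSet k d) = Jideal k d := by
  refine le_antisymm span_genSet_le_J (fun p hp => ?_)
  rw [p.as_sum]
  exact Ideal.sum_mem _ (fun m hm => monomial_mem_span hd (hp m hm) _)

end main3

def Qcond (d : ℕ) (m : Fin 3 →₀ ℕ) : Prop := ∀ i : Fin 3, Pcond d (m + single i 1)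

section colon
variable {k : Type*} [Field k] {d : ℕ} {I : Ideal (MvPolynomial (Fin 3) k)}

lemma mem_colon_iff (p : MvPolynomial (Fin 3) k) :
    p ∈ Submodule.colon I (mIdeal k) ↔ ∀ i : Fin 3, X i * p ∈ I := by
  rw [Submodule.mem_colon]
  constructor
  · intro h i
    have := h (X i) (Ideal.subset_span ⟨i, rfl⟩)
    rwa [smul_eq_mul, mul_comm] at this
  · intro h q hq
    induction hq using Submodule.span_induction with
    | mem x hx => obtain ⟨i, rfl⟩ := hx; rw [smul_eq_mul, mul_comm]; exact h i
    | zero => simp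
    | add x y _ _ hx hy => rw [smul_add]; exact I.add_mem hx hy
    | smul r x _ hx => rw [smul_comm]; exact Ideal.mul_mem_left _ _ hx

lemma X_mul_mem_iff (hI : I = Jideal k d) (p : MvPolynomial (Fin 3) k) (i : Fin 3) :
    X i * p ∈ I ↔ ∀ m ∈ p.support, Pcond d (m + single i 1) := by
  subst hI
  rw [mem_Jideal_iff]
  constructor
  · intro h m hm
    have : single i 1 + m ∈ (X i * p).support := by
      rw [support_X_mul, Finset.mem_map]
      exact ⟨m, hm, rfl⟩
    have := h _ this
    rwa [add_comm] at this
  · intro h m hm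
    rw [support_X_mul, Finset.mem_map] at hm
    obtain ⟨a, ha, rfl⟩ := hm
    simpa [addLeftEmbedding_apply, add_comm] using h a ha

lemma mem_colon_iff' (hI : I = Jideal k d) (p : MvPolynomial (Fin 3) k) :
    p ∈ Submodule.colon I (mIdeal k) ↔ ∀ m ∈ p.support, Qcond d m := by
  rw [mem_colon_iff]
  constructor
  · intro h m hm i
    exact (X_mul_mem_iff hI p i).mp (h i) m hm
  · intro h i
    exact (X_mul_mem_iff hI p i).mpr (fun m hm => h m hm i)

end colon

/-- total degree of an exponent vector -/
def degS (m : Fin 3 →₀ ℕ) : ℕ := m 0 + m 1 + m 2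

lemma weight_eq_degS (m : Fin 3 →₀ ℕ) : (weight 1 m : ℕ) = degS m := by
  rw [weight_apply]
  rw [Finsupp.sum_fintype _ _ (fun _ => rfl)]
  simp [degS, Fin.sum_univ_three]

lemma mem_homog_iff {k : Type*} [Field k] {t : ℕ} (p : MvPolynomial (Fin 3) k) :
    p ∈ homogeneousSubmodule (Fin 3) k t ↔ ∀ m ∈ p.support, degS m = t := by
  rw [mem_homogeneousSubmodule]
  constructor
  · intro h m hm
    rw [← weight_eq_degS]
    exact h (MvPolynomial.mem_support_iff.mp hm)
  · intro h m hm
    rw [weight_eq_degS]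
    exact h m (MvPolynomial.mem_support_iff.mpr hm)

/-- exponent vector (a,b,c) -/
noncomputable def fe (a b c : ℕ) : Fin 3 →₀ ℕ := single 0 a + single 1 b + single 2 c

@[simp] lemma fe_apply0 (a b c : ℕ) : fe a b c 0 = a := by simp [fe, Finsupp.single_apply]
@[simp] lemma fe_apply1 (a b c : ℕ) : fe a b c 1 = b := by simp [fe, Finsupp.single_apply]
@[simp] lemma fe_apply2 (a b c : ℕ) : fe a b c 2 = c := by simp [fe, Finsupp.single_apply]

lemma eq_fe (m : Fin 3 →₀ ℕ) : m = fe (m 0) (m 1) (m 2) := by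
  ext a
  fin_cases a <;> simp

/-- the socle monomial finset in degree t -/
noncomputable def socB (d t : ℕ) : Finset (Fin 3 →₀ ℕ) :=
  (((Finset.range (d - 1)).image (fun a => fe a (d - 2 - a) (d - 1)) ∪
    (Finset.Icc 2 (d - 1)).image (fun a => fe a (d - 1 - a) 0) ∪
    {fe 1 (d - 1) 0}).filter (fun m => degS m = t))

lemma mem_socB_iff {d : ℕ} (hd : 2 ≤ d) (t : ℕ) (m : Fin 3 →₀ ℕ) :
    m ∈ socB d t ↔ (Qcond d m ∧ ¬ Pcond d m ∧ degS m = t) := by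
  rw [socB, Finset.mem_filter]
  have hq : Qcond d m ↔ (Pcond d (m + single 0 1) ∧ Pcond d (m + single 1 1)
      ∧ Pcond d (m + single 2 1)) := by
    constructor
    · intro h; exact ⟨h 0, h 1, h 2⟩
    · rintro ⟨h0, h1, h2⟩ i; fin_cases i <;> assumption
  constructor
  · rintro ⟨hm, hdeg⟩
    refine ⟨?_, ?_, hdeg⟩ <;>
    · rcases Finset.mem_union.mp hm with hm' | hm'
      · rcases Finset.mem_union.mp hm' with hm'' | hm''
        · obtain ⟨a, ha, rfl⟩ := Finset.mem_image.mp hm''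
          rw [Finset.mem_range] at ha
          (try rw [hq])
          simp [Pcond, Finsupp.add_apply, Finsupp.single_apply]
          omega
        · obtain ⟨a, ha, rfl⟩ := Finset.mem_image.mp hm''
          rw [Finset.mem_Icc] at ha
          (try rw [hq])
          simp [Pcond, Finsupp.add_apply, Finsupp.single_apply]
          omega
      · rw [Finset.mem_singleton] at hm'
        subst hm'
        (try rw [hq])
        simp [Pcond, Finsupp.add_apply, Finsupp.single_apply]
        omega
  · rintro ⟨hQ, hP, hdeg⟩
    refine ⟨?_, hdeg⟩
    rw [hq] at hQ
    obtain ⟨hQ0, hQ1, hQ2⟩ := hQ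
    simp [Pcond, Finsupp.add_apply, Finsupp.single_apply] at hQ0 hQ1 hQ2 hP
    set a := m 0 with ha'
    set b := m 1 with hb'
    set c := m 2 with hc'
    by_cases hc : c = 0
    · have key : (2 ≤ a ∧ a ≤ d - 1 ∧ b = d - 1 - a ∧ c = 0) ∨ (a = 1 ∧ b = d - 1 ∧ c = 0) := by
        omega
      rcases key with ⟨k1, k2, k3, k4⟩ | ⟨k1, k2, k3⟩
      · refine Finset.mem_union.mpr (Or.inl (Finset.mem_union.mpr (Or.inr (Finset.mem_image.mpr ⟨a, ?_, ?_⟩))))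
        · exact Finset.mem_Icc.mpr ⟨k1, k2⟩
        · rw [eq_fe m, ← ha', ← hb', ← hc', k3, k4]
      · refine Finset.mem_union.mpr (Or.inr (Finset.mem_singleton.mpr ?_))
        rw [eq_fe m, ← ha', ← hb', ← hc', k1, k2, k3]
    · have key : a < d - 1 ∧ b = d - 2 - a ∧ c = d - 1 := by omega
      obtain ⟨k1, k2, k3⟩ := key
      refine Finset.mem_union.mpr (Or.inl (Finset.mem_union.mpr (Or.inl (Finset.mem_image.mpr ⟨a, ?_, ?_⟩))))
      · exact Finset.mem_range.mpr k1
      · rw [eq_fe m, ← ha', ← hb', ← hc', k2, k3]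

section soc
variable {k : Type*} [Field k] {d : ℕ} {I : Ideal (MvPolynomial (Fin 3) k)}

lemma monomial_mem_J {m : Fin 3 →₀ ℕ} (hm : Pcond d m) (c : k) :
    (monomial m c : MvPolynomial (Fin 3) k) ∈ Jideal k d := by
  intro m' hm'
  classical
  rw [support_monomial] at hm'
  split at hm'
  · simp at hm'
  · rw [Finset.mem_singleton] at hm'; subst hm'; exact hm

lemma image_eq (hd : 2 ≤ d) (hI : I = Jideal k d) (t : ℕ) :
    Submodule.map (Ideal.Quotient.mkₐ k I).toLinearMap
      ((Submodule.colon I (mIdeal k)).restrictScalars k ⊓ homogeneousSubmodule (Fin 3) k t)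
    = Submodule.span k
        ((fun m => Ideal.Quotient.mkₐ k I (monomial m 1)) '' ↑(socB d t)) := by
  apply le_antisymm
  · rintro _ ⟨p, hp, rfl⟩
    rw [SetLike.mem_coe, Submodule.mem_inf, Submodule.restrictScalars_mem] at hp
    obtain ⟨hc, hh⟩ := hp
    rw [mem_colon_iff' hI] at hc
    rw [mem_homog_iff] at hh
    have hps : (Ideal.Quotient.mkₐ k I).toLinearMap p
        = ∑ m ∈ p.support, Ideal.Quotient.mkₐ k I (monomial m (coeff m p)) := by
      conv_lhs => rw [p.as_sum]
      exact map_sum _ _ _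
    rw [hps]
    refine Submodule.sum_mem _ (fun m hm => ?_)
    by_cases hP : Pcond d m
    · have : (monomial m (coeff m p) : MvPolynomial (Fin 3) k) ∈ I := by
        rw [hI]; exact monomial_mem_J hP _
      have h0 : Ideal.Quotient.mkₐ k I (monomial m (coeff m p)) = 0 := by
        rw [Ideal.Quotient.mkₐ_eq_mk, Ideal.Quotient.eq_zero_iff_mem]
        exact this
      rw [h0]
      exact Submodule.zero_mem _
    · have hmB : m ∈ socB d t := (mem_socB_iff hd t m).mpr ⟨hc m hm, hP, hh m hm⟩
      have : (monomial m (coeff m p) : MvPolynomial (Fin 3) k)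
          = coeff m p • monomial m 1 := by
        rw [MvPolynomial.smul_monomial, smul_eq_mul, mul_one]
      rw [this, map_smul]
      exact Submodule.smul_mem _ _ (Submodule.subset_span ⟨m, hmB, rfl⟩)
  · rw [Submodule.span_le]
    rintro _ ⟨m, hm, rfl⟩
    obtain ⟨hQ, hP, hdeg⟩ := (mem_socB_iff hd t m).mp hm
    refine ⟨monomial m 1, ?_, rfl⟩
    rw [SetLike.mem_coe, Submodule.mem_inf, Submodule.restrictScalars_mem, mem_colon_iff' hI, mem_homog_iff]
    constructor <;>
    · intro m' hm'
      classical
      rw [support_monomial, if_neg one_ne_zero, Finset.mem_singleton] at hm'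
      subst hm'
      assumption

lemma li_socB (hd : 2 ≤ d) (hI : I = Jideal k d) (t : ℕ) :
    LinearIndependent k (fun m : ↥(socB d t) =>
      Ideal.Quotient.mkₐ k I (monomial (m : Fin 3 →₀ ℕ) 1)) := by
  classical
  rw [linearIndependent_iff']
  intro s g hsum j hj
  set q : MvPolynomial (Fin 3) k := ∑ i ∈ s, monomial (i : Fin 3 →₀ ℕ) (g i) with hq
  have hmk : Ideal.Quotient.mkₐ k I q = 0 := by
    rw [hq, map_sum, ← hsum]
    refine Finset.sum_congr rfl (fun i _ => ?_)
    rw [show (monomial (i : Fin 3 →₀ ℕ) (g i) : MvPolynomial (Fin 3) k)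
        = g i • monomial (i : Fin 3 →₀ ℕ) 1 by
      rw [MvPolynomial.smul_monomial, smul_eq_mul, mul_one], map_smul]
  have hqI : q ∈ I := by
    rwa [Ideal.Quotient.mkₐ_eq_mk, Ideal.Quotient.eq_zero_iff_mem] at hmk
  rw [hI] at hqI
  by_contra hg
  have hcoeff : coeff (j : Fin 3 →₀ ℕ) q = g j := by
    rw [hq, MvPolynomial.coeff_sum]
    have hz : ∀ i ∈ s, i ≠ j → coeff (j : Fin 3 →₀ ℕ)
        ((monomial (i : Fin 3 →₀ ℕ) (g i)) : MvPolynomial (Fin 3) k) = 0 := by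
      intro i _ hne
      rw [MvPolynomial.coeff_monomial, if_neg (fun h => hne (Subtype.ext h))]
    rw [Finset.sum_eq_single_of_mem j hj hz, MvPolynomial.coeff_monomial, if_pos rfl]
  have hsup : (j : Fin 3 →₀ ℕ) ∈ q.support := by
    rw [MvPolynomial.mem_support_iff, hcoeff]; exact hg
  have := hqI _ hsup
  exact ((mem_socB_iff hd t j).mp j.2).2.1 this

end soc

section count
variable {k : Type*} [Field k] {d : ℕ} {I : Ideal (MvPolynomial (Fin 3) k)}

lemma socDim_eq (hd : 2 ≤ d) (hI : I = Jideal k d) (t : ℕ) :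
    socDimAt I t = (socB d t).card := by
  rw [socDimAt, image_eq hd hI t]
  rw [show ((fun m => Ideal.Quotient.mkₐ k I (monomial m 1)) '' ↑(socB d t))
      = Set.range (fun m : ↥(socB d t) =>
        Ideal.Quotient.mkₐ k I (monomial (m : Fin 3 →₀ ℕ) 1)) from
    (Set.image_eq_range _ _)]
  rw [finrank_span_eq_card (li_socB hd hI t)]
  simp [Fintype.card_coe]

lemma card_socB (hd : 2 ≤ d) (t : ℕ) :
    (socB d t).card = (d - 2) * (if t = d - 1 then 1 else 0) + (if t = d then 1 else 0)
      + (d - 1) * (if t = 2 * d - 3 then 1 else 0) := by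
  classical
  set F1 := (Finset.range (d-1)).image (fun a => fe a (d-2-a) (d-1)) with hF1
  set F2 := (Finset.Icc 2 (d-1)).image (fun a => fe a (d-1-a) 0) with hF2
  set F3 : Finset (Fin 3 →₀ ℕ) := {fe 1 (d-1) 0} with hF3
  have hdg1 : ∀ m ∈ F1, degS m = 2*d-3 := by
    rintro m hm
    obtain ⟨a, ha, rfl⟩ := Finset.mem_image.mp hm
    rw [Finset.mem_range] at ha
    simp [degS]; omega
  have hdg2 : ∀ m ∈ F2, degS m = d-1 := by
    rintro m hm
    obtain ⟨a, ha, rfl⟩ := Finset.mem_image.mp hm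
    rw [Finset.mem_Icc] at ha
    simp [degS]; omega
  have hdg3 : ∀ m ∈ F3, degS m = d := by
    rintro m hm
    rw [hF3, Finset.mem_singleton] at hm
    subst hm
    simp [degS]; omega
  have hfilt : ∀ (s : Finset (Fin 3 →₀ ℕ)) (D : ℕ), (∀ m ∈ s, degS m = D) →
      s.filter (fun m => degS m = t) = if t = D then s else ∅ := by
    intro s D h
    split_ifs with ht
    · exact Finset.filter_true_of_mem (fun m hm => by rw [h m hm, ht])
    · exact Finset.filter_false_of_mem (fun m hm hx => ht (hx.symm.trans (h m hm)))
  have hdisj12 : Disjoint F1 F2 := by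
    rw [Finset.disjoint_left]
    rintro m hm1 hm2
    obtain ⟨a, ha, rfl⟩ := Finset.mem_image.mp hm1
    obtain ⟨b, hb, hfe⟩ := Finset.mem_image.mp hm2
    have := congrArg (fun m => m 2) hfe
    simp at this
    omega
  have hdisj13 : Disjoint F1 F3 := by
    rw [Finset.disjoint_left]
    rintro m hm1 hm2
    obtain ⟨a, ha, rfl⟩ := Finset.mem_image.mp hm1
    rw [hF3, Finset.mem_singleton] at hm2
    have := congrArg (fun m => m 2) hm2
    simp at this
    omega
  have hdisj23 : Disjoint F2 F3 := by
    rw [Finset.disjoint_left]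
    rintro m hm1 hm2
    obtain ⟨a, ha, rfl⟩ := Finset.mem_image.mp hm1
    rw [Finset.mem_Icc] at ha
    rw [hF3, Finset.mem_singleton] at hm2
    have := congrArg (fun m => m 0) hm2
    simp at this
    omega
  have c1 : F1.card = d - 1 := by
    rw [hF1, Finset.card_image_of_injective _ (fun a b h => by
      simpa using congrArg (fun m => m 0) h), Finset.card_range]
  have c2 : F2.card = d - 2 := by
    rw [hF2, Finset.card_image_of_injective _ (fun a b h => by
      simpa using congrArg (fun m => m 0) h), Nat.card_Icc]
    omega
  have c3 : F3.card = 1 := by rw [hF3, Finset.card_singleton]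
  rw [socB, ← hF1, ← hF2, ← hF3]
  rw [Finset.filter_union, Finset.filter_union]
  rw [Finset.card_union_of_disjoint (Finset.disjoint_union_left.mpr
    ⟨Finset.disjoint_filter_filter hdisj13, Finset.disjoint_filter_filter hdisj23⟩)]
  rw [Finset.card_union_of_disjoint (Finset.disjoint_filter_filter hdisj12)]
  rw [hfilt F1 _ hdg1, hfilt F2 _ hdg2, hfilt F3 _ hdg3]
  split_ifs <;> simp only [c1, c2, c3, Finset.card_empty] <;> omega

end count

/-- ideal of polynomials all of whose monomials have degree at least n -/
def Kdeg (k : Type*) [Field k] (n : ℕ) : Ideal (MvPolynomial (Fin 3) k) where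
  carrier := {p | ∀ m ∈ p.support, n ≤ degS m}
  add_mem' {p q} hp hq m hm := by
    classical
    rcases Finset.mem_union.mp (MvPolynomial.support_add hm) with h | h
    · exact hp m h
    · exact hq m h
  zero_mem' := by simp
  smul_mem' r p hp := by
    classical
    intro m hm
    rcases Finset.mem_add.mp (MvPolynomial.support_mul r p hm) with ⟨a, ha, b, hb, rfl⟩
    have := hp b hb
    simp only [degS, Finsupp.add_apply] at *
    omega

lemma mIdeal_le_Kdeg {k : Type*} [Field k] : mIdeal k ≤ Kdeg k 1 := by
  rw [mIdeal, Ideal.span_le]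
  rintro _ ⟨i, rfl⟩ m hm
  rw [MvPolynomial.support_X, Finset.mem_singleton] at hm
  subst hm
  fin_cases i <;> simp [degS, Finsupp.single_apply]

lemma pow_mIdeal_le_Kdeg {k : Type*} [Field k] (n : ℕ) : (mIdeal k) ^ n ≤ Kdeg k n := by
  induction n with
  | zero => intro p _ m _; exact Nat.zero_le _
  | succ n ih =>
    rw [pow_succ, Ideal.mul_le]
    intro r hr s hs m hm
    classical
    rcases Finset.mem_add.mp (MvPolynomial.support_mul r s hm) with ⟨a, ha, b, hb, rfl⟩
    have h1 := ih hr a ha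
    have h2 := mIdeal_le_Kdeg hs b hb
    simp only [degS, Finsupp.add_apply] at *
    omega

lemma Kdeg_le_J {k : Type*} [Field k] {d : ℕ} (hd : 2 ≤ d) :
    Kdeg k (2 * d - 1) ≤ Jideal k d := by
  intro p hp m hm
  have := hp m hm
  simp only [degS] at this
  simp only [Pcond]
  omega


/-- For `I = (z(x,y)^{d−1}, x²(x,y)^{d−2}, y^d, z^d) ⊆ k[x,y,z]` with `d ≥ 2`:
`I` is `𝔪`-primary, and `dim_k Soc(R/I)_t = (d−2)·[t=d−1] + [t=d] + (d−1)·[t=2d−3]`.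
In particular, if `d ≥ 3` then every homogeneous polynomial of degree `2d−2` lies in `I`. -/
theorem stmt1 {k : Type*} [Field k] (d : ℕ) (hd : 2 ≤ d)
    (I : Ideal (MvPolynomial (Fin 3) k))
    (hI : I = Ideal.span
      ({p | ∃ i ≤ d - 1, p = X 2 * X 0 ^ i * X 1 ^ (d - 1 - i)} ∪
       {p | ∃ j ≤ d - 2, p = X 0 ^ (2 + j) * X 1 ^ (d - 2 - j)} ∪
       {X 1 ^ d, X 2 ^ d})) :
    (∃ N : ℕ, 1 ≤ N ∧ (mIdeal k) ^ N ≤ I)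
    ∧ (∀ t : ℕ, socDimAt I t =
        (d - 2) * (if t = d - 1 then 1 else 0) + (if t = d then 1 else 0)
          + (d - 1) * (if t = 2 * d - 3 then 1 else 0))
    ∧ (3 ≤ d → ∀ h : MvPolynomial (Fin 3) k, h.IsHomogeneous (2 * d - 2) → h ∈ I) := by
  have hIJ : I = Jideal k d := hI.trans (span_eq_J hd)
  refine ⟨⟨2 * d - 1, by omega, ?_⟩, ?_, ?_⟩
  · refine le_trans (pow_mIdeal_le_Kdeg _) ?_
    rw [hIJ]
    exact Kdeg_le_J hd
  · intro t
    rw [socDim_eq hd hIJ t, card_socB hd t]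
  · intro hd3 h hh
    rw [hIJ]
    intro m hm
    have h1 := hh (MvPolynomial.mem_support_iff.mp hm)
    have h2 : degS m = 2 * d - 2 := by rw [← weight_eq_degS, h1]
    simp only [degS] at h2
    simp only [Pcond]
    omega
end

section
/- Let k be a field, R = k[x,y,z] with 𝔪 = (x,y,z), let d' ≥ 2 be an integer, and let I = (x^{2d'}, y^{2d'}, z^{2d'}, x^{d'}·y^{d'}, x·z^{2d'−1}). Then I is 𝔪-primary, and for every integer t ≥ 0 one has dim_k Soc(R/I)_t = 1·[t = 4d'−2] + 2·[t = 5d'−4], where [·] equals 1 if the condition holds and 0 otherwise and the contributions are added when 4d'−2 = 5d'−4 (i.e. when d' = 2). -/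
open MvPolynomial

namespace Stmt3Aux

open Finsupp

/-- The exponent set of the generators. -/
def Sgen (d : ℕ) : Set (Fin 3 →₀ ℕ) :=
  {single 0 (2*d), single 1 (2*d), single 2 (2*d), single 0 d + single 1 d,
   single 0 1 + single 2 (2*d-1)}

/-- `μ` dominates some generating exponent. -/
def Up (d : ℕ) (μ : Fin 3 →₀ ℕ) : Prop := ∃ s ∈ Sgen d, s ≤ μ

lemma le3 (μ ν : Fin 3 →₀ ℕ) : μ ≤ ν ↔ μ 0 ≤ ν 0 ∧ μ 1 ≤ ν 1 ∧ μ 2 ≤ ν 2 := by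
  constructor
  · intro h; exact ⟨h 0, h 1, h 2⟩
  · rintro ⟨h0, h1, h2⟩ i; fin_cases i <;> assumption

lemma eq3 (μ ν : Fin 3 →₀ ℕ) : μ = ν ↔ μ 0 = ν 0 ∧ μ 1 = ν 1 ∧ μ 2 = ν 2 := by
  constructor
  · intro h; subst h; exact ⟨rfl, rfl, rfl⟩
  · rintro ⟨h0, h1, h2⟩; ext i; fin_cases i <;> assumption

lemma forall3 (P : Fin 3 → Prop) : (∀ i, P i) ↔ P 0 ∧ P 1 ∧ P 2 := by
  constructor
  · intro h; exact ⟨h 0, h 1, h 2⟩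
  · rintro ⟨h0, h1, h2⟩ i; fin_cases i <;> assumption

lemma deg3 (μ : Fin 3 →₀ ℕ) : μ.degree = μ 0 + μ 1 + μ 2 := by
  classical
  have : μ.degree = ∑ i : Fin 3, μ i := by
    rw [Finsupp.degree]
    refine Finset.sum_subset (f := fun i => μ i) (Finset.subset_univ μ.support) ?_
    intro i _ h
    simpa using h
  rw [this, Fin.sum_univ_three]

lemma up_iff (d : ℕ) (μ : Fin 3 →₀ ℕ) : Up d μ ↔
    2*d ≤ μ 0 ∨ 2*d ≤ μ 1 ∨ 2*d ≤ μ 2 ∨ (d ≤ μ 0 ∧ d ≤ μ 1) ∨ (1 ≤ μ 0 ∧ 2*d-1 ≤ μ 2) := by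
  simp only [Up, Sgen, Set.mem_insert_iff, Set.mem_singleton_iff, exists_eq_or_imp,
    exists_eq_left, le3, Finsupp.add_apply, Finsupp.single_apply]
  norm_num [Fin.ext_iff]

noncomputable def sig1 (d : ℕ) : Fin 3 →₀ ℕ := single 1 (2*d-1) + single 2 (2*d-1)
noncomputable def sig2 (d : ℕ) : Fin 3 →₀ ℕ := single 0 (2*d-1) + single 1 (d-1) + single 2 (2*d-2)
noncomputable def sig3 (d : ℕ) : Fin 3 →₀ ℕ := single 0 (d-1) + single 1 (2*d-1) + single 2 (2*d-2)

lemma sig1_apply (d : ℕ) : sig1 d 0 = 0 ∧ sig1 d 1 = 2*d-1 ∧ sig1 d 2 = 2*d-1 := by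
  simp [sig1, Finsupp.single_apply, Fin.ext_iff]
lemma sig2_apply (d : ℕ) : sig2 d 0 = 2*d-1 ∧ sig2 d 1 = d-1 ∧ sig2 d 2 = 2*d-2 := by
  simp [sig2, Finsupp.single_apply, Fin.ext_iff]
lemma sig3_apply (d : ℕ) : sig3 d 0 = d-1 ∧ sig3 d 1 = 2*d-1 ∧ sig3 d 2 = 2*d-2 := by
  simp [sig3, Finsupp.single_apply, Fin.ext_iff]

lemma deg_sig1 (d : ℕ) (hd : 2 ≤ d) : (sig1 d).degree = 4*d-2 := by
  obtain ⟨a,b,c⟩ := sig1_apply d; rw [deg3, a, b, c]; omega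
lemma deg_sig2 (d : ℕ) (hd : 2 ≤ d) : (sig2 d).degree = 5*d-4 := by
  obtain ⟨a,b,c⟩ := sig2_apply d; rw [deg3, a, b, c]; omega
lemma deg_sig3 (d : ℕ) (hd : 2 ≤ d) : (sig3 d).degree = 5*d-4 := by
  obtain ⟨a,b,c⟩ := sig3_apply d; rw [deg3, a, b, c]; omega

lemma sig_ne (d : ℕ) (hd : 2 ≤ d) :
    sig1 d ≠ sig2 d ∧ sig1 d ≠ sig3 d ∧ sig2 d ≠ sig3 d := by
  obtain ⟨a1,b1,c1⟩ := sig1_apply d; obtain ⟨a2,b2,c2⟩ := sig2_apply d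
  obtain ⟨a3,b3,c3⟩ := sig3_apply d
  refine ⟨?_, ?_, ?_⟩ <;> intro h
  · rw [h, a2] at a1; omega
  · rw [h, a3] at a1; omega
  · rw [h, a3] at a2; rw [h, b3] at b2; omega

lemma not_up_sig (d : ℕ) (hd : 2 ≤ d) : ¬ Up d (sig1 d) ∧ ¬ Up d (sig2 d) ∧ ¬ Up d (sig3 d) := by
  obtain ⟨a1,b1,c1⟩ := sig1_apply d; obtain ⟨a2,b2,c2⟩ := sig2_apply d
  obtain ⟨a3,b3,c3⟩ := sig3_apply d
  refine ⟨?_, ?_, ?_⟩ <;> rw [up_iff]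
  · rw [a1, b1, c1]; omega
  · rw [a2, b2, c2]; omega
  · rw [a3, b3, c3]; omega

set_option maxHeartbeats 1000000 in
lemma soc_classify (d : ℕ) (hd : 2 ≤ d) (μ : Fin 3 →₀ ℕ) :
    (¬ Up d μ ∧ ∀ i : Fin 3, Up d (μ + single i 1)) ↔
      μ = sig1 d ∨ μ = sig2 d ∨ μ = sig3 d := by
  obtain ⟨a1,b1,c1⟩ := sig1_apply d; obtain ⟨a2,b2,c2⟩ := sig2_apply d
  obtain ⟨a3,b3,c3⟩ := sig3_apply d
  rw [forall3]
  simp only [up_iff, eq3, Finsupp.add_apply, Finsupp.single_apply, a1,b1,c1,a2,b2,c2,a3,b3,c3]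
  norm_num [Fin.ext_iff]
  clear a1 b1 c1 a2 b2 c2 a3 b3 c3
  generalize μ 0 = a; generalize μ 1 = b; generalize μ 2 = c
  omega

lemma up_sig_add (d : ℕ) (hd : 2 ≤ d) (μ : Fin 3 →₀ ℕ)
    (h : μ = sig1 d ∨ μ = sig2 d ∨ μ = sig3 d) (i : Fin 3) : Up d (μ + single i 1) :=
  ((soc_classify d hd μ).mpr h).2 i

variable {k : Type*} [Field k]

lemma gen_eq (d : ℕ) :
    ({X 0 ^ (2 * d), X 1 ^ (2 * d), X 2 ^ (2 * d),
      X 0 ^ d * X 1 ^ d, X 0 * X 2 ^ (2 * d - 1)} : Set (MvPolynomial (Fin 3) k)) =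
    (fun s => monomial s (1:k)) '' Sgen d := by
  have h1 : (X 0 : MvPolynomial (Fin 3) k) ^ (2*d) = monomial (single 0 (2*d)) 1 :=
    X_pow_eq_monomial
  have h2 : (X 1 : MvPolynomial (Fin 3) k) ^ (2*d) = monomial (single 1 (2*d)) 1 :=
    X_pow_eq_monomial
  have h3 : (X 2 : MvPolynomial (Fin 3) k) ^ (2*d) = monomial (single 2 (2*d)) 1 :=
    X_pow_eq_monomial
  have h4 : (X 0 : MvPolynomial (Fin 3) k) ^ d * X 1 ^ d
      = monomial (single 0 d + single 1 d) 1 := by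
    rw [X_pow_eq_monomial, X_pow_eq_monomial, monomial_mul, one_mul]
  have h5 : (X 0 : MvPolynomial (Fin 3) k) * X 2 ^ (2*d-1)
      = monomial (single 0 1 + single 2 (2*d-1)) 1 := by
    rw [X_pow_eq_monomial, X, monomial_mul, one_mul]
  rw [h1, h2, h3, h4, h5, Sgen]
  simp only [Set.image_insert_eq, Set.image_singleton]

lemma memI_iff (d : ℕ) (I : Ideal (MvPolynomial (Fin 3) k))
    (hI : I = Ideal.span {X 0 ^ (2 * d), X 1 ^ (2 * d), X 2 ^ (2 * d),
      X 0 ^ d * X 1 ^ d, X 0 * X 2 ^ (2 * d - 1)})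
    (p : MvPolynomial (Fin 3) k) :
    p ∈ I ↔ ∀ μ ∈ p.support, Up d μ := by
  rw [hI, gen_eq, mem_ideal_span_monomial_image]
  rfl

lemma mono_memI (d : ℕ) (I : Ideal (MvPolynomial (Fin 3) k))
    (hI : I = Ideal.span {X 0 ^ (2 * d), X 1 ^ (2 * d), X 2 ^ (2 * d),
      X 0 ^ d * X 1 ^ d, X 0 * X 2 ^ (2 * d - 1)})
    (μ : Fin 3 →₀ ℕ) : (monomial μ (1:k)) ∈ I ↔ Up d μ := by
  classical
  rw [memI_iff d I hI]
  constructor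
  · intro h; exact h μ (by simp [support_monomial])
  · intro h ν hν
    rw [support_monomial, if_neg one_ne_zero, Finset.mem_singleton] at hν
    subst hν; exact h

lemma degree_add3 (μ ν : Fin 3 →₀ ℕ) : (μ + ν).degree = μ.degree + ν.degree := by
  simp only [deg3, Finsupp.add_apply]; ring

lemma mem_m_supp (p : MvPolynomial (Fin 3) k) (hp : p ∈ mIdeal k) :
    ∀ μ ∈ p.support, 1 ≤ μ.degree := by
  rw [mIdeal, ← Set.image_univ, mem_ideal_span_X_image] at hp
  intro μ hμ
  obtain ⟨i, _, hi⟩ := hp μ hμ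
  exact le_trans (Nat.one_le_iff_ne_zero.mpr hi) (Finsupp.le_degree i μ)

lemma pow_supp (N : ℕ) : ∀ p ∈ (mIdeal k)^N, ∀ μ ∈ p.support, N ≤ μ.degree := by
  classical
  induction N with
  | zero => intro p _ μ _; exact Nat.zero_le _
  | succ N ih =>
    intro p hp
    rw [pow_succ] at hp
    refine Submodule.mul_induction_on hp ?_ ?_
    · intro a ha b hb μ hμ
      have := MvPolynomial.support_mul a b hμ
      rw [Finset.mem_add] at this
      obtain ⟨ν, hν, ρ, hρ, rfl⟩ := this
      rw [degree_add3]
      have h1 := ih a ha ν hν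
      have h2 := mem_m_supp b hb ρ hρ
      omega
    · intro x y hx hy μ hμ
      have := Finsupp.support_add hμ
      rw [Finset.mem_union] at this
      rcases this with h | h
      · exact hx μ h
      · exact hy μ h

lemma primary (d : ℕ) (hd : 2 ≤ d) (I : Ideal (MvPolynomial (Fin 3) k))
    (hI : I = Ideal.span {X 0 ^ (2 * d), X 1 ^ (2 * d), X 2 ^ (2 * d),
      X 0 ^ d * X 1 ^ d, X 0 * X 2 ^ (2 * d - 1)}) :
    (mIdeal k) ^ (6*d) ≤ I := by
  intro p hp
  rw [memI_iff d I hI]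
  intro μ hμ
  have := pow_supp (6*d) p hp μ hμ
  rw [deg3] at this
  rw [up_iff]
  omega

lemma colon_mono (d : ℕ) (I : Ideal (MvPolynomial (Fin 3) k))
    (hI : I = Ideal.span {X 0 ^ (2 * d), X 1 ^ (2 * d), X 2 ^ (2 * d),
      X 0 ^ d * X 1 ^ d, X 0 * X 2 ^ (2 * d - 1)})
    (μ : Fin 3 →₀ ℕ) (hμ : ∀ i, Up d (μ + single i 1)) :
    monomial μ (1:k) ∈ Submodule.colon I (mIdeal k) := by
  rw [Submodule.mem_colon]
  have hsub : mIdeal k ≤ Submodule.comap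
      (LinearMap.mulLeft (MvPolynomial (Fin 3) k) (monomial μ (1:k))) I := by
    rw [mIdeal, Ideal.span_le]
    rintro _ ⟨i, rfl⟩
    simp only [SetLike.mem_coe, Submodule.mem_comap, LinearMap.mulLeft_apply]
    rw [X, monomial_mul, one_mul]
    exact (mono_memI d I hI _).mpr (hμ i)
  intro p hp
  simpa using hsub hp

lemma lin_indep (d : ℕ) (I : Ideal (MvPolynomial (Fin 3) k))
    (hI : I = Ideal.span {X 0 ^ (2 * d), X 1 ^ (2 * d), X 2 ^ (2 * d),
      X 0 ^ d * X 1 ^ d, X 0 * X 2 ^ (2 * d - 1)})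
    {ι : Type} [Fintype ι] [DecidableEq ι] (μs : ι → (Fin 3 →₀ ℕ))
    (hinj : Function.Injective μs) (hup : ∀ i, ¬ Up d (μs i)) :
    LinearIndependent k (fun i => Ideal.Quotient.mkₐ k I (monomial (μs i) 1)) := by
  rw [Fintype.linearIndependent_iff]
  intro g hg j
  by_contra hgj
  have h0 : Ideal.Quotient.mkₐ k I (∑ i, g i • monomial (μs i) 1) = 0 := by
    rw [map_sum]
    simpa [map_smul] using hg
  rw [Ideal.Quotient.mkₐ_eq_mk, Ideal.Quotient.eq_zero_iff_mem] at h0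
  have hsupp : μs j ∈ (∑ i, g i • (monomial (μs i) (1:k))).support := by
    rw [MvPolynomial.mem_support_iff]
    have : coeff (μs j) (∑ i, g i • (monomial (μs i) (1:k)))
        = ∑ i, g i * (if μs i = μs j then 1 else 0) := by
      rw [coeff_sum]
      congr 1; ext i
      rw [coeff_smul, coeff_monomial, smul_eq_mul]
    rw [this, Finset.sum_eq_single j]
    · simpa using hgj
    · intro i _ hij
      rw [if_neg (fun h => hij (hinj h)), mul_zero]
    · intro h; exact absurd (Finset.mem_univ j) h
  exact hup j ((memI_iff d I hI _).mp h0 _ hsupp)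

lemma map_span (d : ℕ) (hd : 2 ≤ d) (I : Ideal (MvPolynomial (Fin 3) k))
    (hI : I = Ideal.span {X 0 ^ (2 * d), X 1 ^ (2 * d), X 2 ^ (2 * d),
      X 0 ^ d * X 1 ^ d, X 0 * X 2 ^ (2 * d - 1)}) (t : ℕ) :
    Submodule.map (Ideal.Quotient.mkₐ k I).toLinearMap
      ((Submodule.colon I (mIdeal k)).restrictScalars k ⊓ homogeneousSubmodule (Fin 3) k t)
    = Submodule.span k ((fun μ => Ideal.Quotient.mkₐ k I (monomial μ 1)) ''
        {μ | (μ = sig1 d ∨ μ = sig2 d ∨ μ = sig3 d) ∧ μ.degree = t}) := by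
  apply le_antisymm
  · rintro x ⟨p, ⟨hpc, hph⟩, rfl⟩
    have hps : Ideal.Quotient.mkₐ k I p
        = ∑ μ ∈ p.support, (coeff μ p) • Ideal.Quotient.mkₐ k I (monomial μ 1) := by
      conv_lhs => rw [show p = ∑ μ ∈ p.support, monomial μ (coeff μ p) from p.as_sum]
      rw [map_sum]
      refine Finset.sum_congr rfl ?_
      intro μ _
      rw [← map_smul, smul_monomial, smul_eq_mul, mul_one]
    rw [AlgHom.toLinearMap_apply, hps]
    refine Submodule.sum_mem _ ?_
    intro μ hμ
    refine Submodule.smul_mem _ _ ?_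
    by_cases hup : Up d μ
    · rw [show Ideal.Quotient.mkₐ k I (monomial μ 1) = 0 from ?_]
      · exact Submodule.zero_mem _
      · rw [Ideal.Quotient.mkₐ_eq_mk, Ideal.Quotient.eq_zero_iff_mem]
        exact (mono_memI d I hI μ).mpr hup
    · have hcol : ∀ i : Fin 3, Up d (μ + single i 1) := by
        intro i
        have hXi : (X i : MvPolynomial (Fin 3) k) ∈ mIdeal k :=
          Ideal.subset_span ⟨i, rfl⟩
        have hmem : p * X i ∈ I := by
          have hpc' : p ∈ Submodule.colon I (mIdeal k) :=
            (Submodule.restrictScalars_mem k _ p).mp hpc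
          have := Submodule.mem_colon.mp hpc' (X i) hXi
          simpa [smul_eq_mul] using this
        refine (memI_iff d I hI _).mp hmem _ ?_
        rw [MvPolynomial.mem_support_iff, coeff_mul_X]
        exact MvPolynomial.mem_support_iff.mp hμ
      have hsoc : μ = sig1 d ∨ μ = sig2 d ∨ μ = sig3 d :=
        (soc_classify d hd μ).mp ⟨hup, hcol⟩
      have hdeg : μ.degree = t := by
        have := hph (MvPolynomial.mem_support_iff.mp hμ)
        rw [Finsupp.degree_eq_weight_one]
        exact this
      exact Submodule.subset_span ⟨μ, ⟨hsoc, hdeg⟩, rfl⟩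
  · rw [Submodule.span_le]
    rintro x ⟨μ, ⟨hsoc, hdeg⟩, rfl⟩
    refine Submodule.mem_map_of_mem ⟨?_, ?_⟩
    · exact (Submodule.restrictScalars_mem k _ _).mpr
        (colon_mono d I hI μ (fun i => ((soc_classify d hd μ).mpr hsoc).2 i))
    · exact (mem_homogeneousSubmodule _ _).mpr (isHomogeneous_monomial _ hdeg)

lemma range3 {α : Type*} (f : Fin 3 → α) : Set.range f = {f 0, f 1, f 2} := by
  ext x
  constructor
  · rintro ⟨i, rfl⟩; fin_cases i <;> simp
  · rintro (rfl | rfl | rfl)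
    exacts [⟨0, rfl⟩, ⟨1, rfl⟩, ⟨2, rfl⟩]

lemma range2 {α : Type*} (f : Fin 2 → α) : Set.range f = {f 0, f 1} := by
  ext x
  constructor
  · rintro ⟨i, rfl⟩; fin_cases i <;> simp
  · rintro (rfl | rfl)
    exacts [⟨0, rfl⟩, ⟨1, rfl⟩]

end Stmt3Aux

open Stmt3Aux Finsupp in
theorem stmt3' {k : Type*} [Field k] (d' : ℕ) (hd' : 2 ≤ d')
    (I : Ideal (MvPolynomial (Fin 3) k))
    (hI : I = Ideal.span
      {X 0 ^ (2 * d'), X 1 ^ (2 * d'), X 2 ^ (2 * d'),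
       X 0 ^ d' * X 1 ^ d', X 0 * X 2 ^ (2 * d' - 1)}) :
    (∃ N : ℕ, 1 ≤ N ∧ (mIdeal k) ^ N ≤ I)
    ∧ (∀ t : ℕ, socDimAt I t =
        (if t = 4 * d' - 2 then 1 else 0) + 2 * (if t = 5 * d' - 4 then 1 else 0)) := by
  obtain ⟨n12, n13, n23⟩ := sig_ne d' hd'
  obtain ⟨u1, u2, u3⟩ := not_up_sig d' hd'
  set F : (Fin 3 →₀ ℕ) → (MvPolynomial (Fin 3) k ⧸ I) :=
    fun μ => Ideal.Quotient.mkₐ k I (monomial μ 1) with hF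
  have hFne : ∀ μ : Fin 3 →₀ ℕ, ¬ Up d' μ → F μ ≠ 0 := by
    intro μ hμ h
    rw [hF, Ideal.Quotient.mkₐ_eq_mk, Ideal.Quotient.eq_zero_iff_mem] at h
    exact hμ ((mono_memI d' I hI μ).mp h)
  refine ⟨⟨6*d', by omega, primary d' hd' I hI⟩, ?_⟩
  intro t
  unfold socDimAt
  rw [map_span d' hd' I hI t]
  by_cases h1 : t = 4*d'-2 <;> by_cases h2 : t = 5*d'-4
  · -- both: d' = 2, three socle elements
    rw [if_pos h1, if_pos h2]
    have hset : {μ : Fin 3 →₀ ℕ | (μ = sig1 d' ∨ μ = sig2 d' ∨ μ = sig3 d') ∧ μ.degree = t}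
        = {sig1 d', sig2 d', sig3 d'} := by
      ext μ
      simp only [Set.mem_setOf_eq, Set.mem_insert_iff, Set.mem_singleton_iff]
      constructor
      · rintro ⟨h, _⟩; exact h
      · intro h
        refine ⟨h, ?_⟩
        rcases h with rfl | rfl | rfl
        · rw [deg_sig1 d' hd']; omega
        · rw [deg_sig2 d' hd']; omega
        · rw [deg_sig3 d' hd']; omega
    have hinj : Function.Injective ![sig1 d', sig2 d', sig3 d'] := by
      intro i j h
      fin_cases i <;> fin_cases j <;>
        simp only [Matrix.cons_val_zero, Matrix.cons_val_one, Matrix.head_cons,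
          Matrix.cons_val_two, Matrix.tail_cons] at h ⊢ <;>
        first
          | rfl
          | exact absurd h n12 | exact absurd h.symm n12
          | exact absurd h n13 | exact absurd h.symm n13
          | exact absurd h n23 | exact absurd h.symm n23
    have hli := lin_indep d' I hI ![sig1 d', sig2 d', sig3 d'] hinj
      (by intro i; fin_cases i <;> simpa)
    have himg : F '' {sig1 d', sig2 d', sig3 d'}
        = Set.range (fun i => F (![sig1 d', sig2 d', sig3 d'] i)) := by
      rw [range3]
      simp [Set.image_insert_eq, Set.image_singleton]
    rw [hset, himg, finrank_span_eq_card hli]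
    simp
  · -- t = 4d'-2 only
    rw [if_pos h1, if_neg h2]
    have hset : {μ : Fin 3 →₀ ℕ | (μ = sig1 d' ∨ μ = sig2 d' ∨ μ = sig3 d') ∧ μ.degree = t}
        = {sig1 d'} := by
      ext μ
      simp only [Set.mem_setOf_eq, Set.mem_singleton_iff]
      constructor
      · rintro ⟨rfl | rfl | rfl, hdeg⟩
        · rfl
        · rw [deg_sig2 d' hd'] at hdeg; omega
        · rw [deg_sig3 d' hd'] at hdeg; omega
      · rintro rfl
        exact ⟨Or.inl rfl, by rw [deg_sig1 d' hd']; omega⟩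
    rw [hset, Set.image_singleton, finrank_span_singleton (hFne _ u1)]
  · -- t = 5d'-4 only
    rw [if_neg h1, if_pos h2]
    have hset : {μ : Fin 3 →₀ ℕ | (μ = sig1 d' ∨ μ = sig2 d' ∨ μ = sig3 d') ∧ μ.degree = t}
        = {sig2 d', sig3 d'} := by
      ext μ
      simp only [Set.mem_setOf_eq, Set.mem_insert_iff, Set.mem_singleton_iff]
      constructor
      · rintro ⟨rfl | rfl | rfl, hdeg⟩
        · rw [deg_sig1 d' hd'] at hdeg; omega
        · exact Or.inl rfl
        · exact Or.inr rfl
      · rintro (rfl | rfl)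
        · exact ⟨Or.inr (Or.inl rfl), by rw [deg_sig2 d' hd']; omega⟩
        · exact ⟨Or.inr (Or.inr rfl), by rw [deg_sig3 d' hd']; omega⟩
    have hinj : Function.Injective ![sig2 d', sig3 d'] := by
      intro i j h
      fin_cases i <;> fin_cases j <;>
        simp only [Matrix.cons_val_zero, Matrix.cons_val_one, Matrix.head_cons] at h ⊢ <;>
        first
          | rfl
          | exact absurd h n23 | exact absurd h.symm n23
    have hli := lin_indep d' I hI ![sig2 d', sig3 d'] hinj
      (by intro i; fin_cases i <;> simpa)
    have himg : F '' {sig2 d', sig3 d'}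
        = Set.range (fun i => F (![sig2 d', sig3 d'] i)) := by
      rw [range2]
      simp [Set.image_insert_eq, Set.image_singleton]
    rw [hset, himg, finrank_span_eq_card hli]
    simp
  · -- neither
    rw [if_neg h1, if_neg h2]
    have hset : {μ : Fin 3 →₀ ℕ | (μ = sig1 d' ∨ μ = sig2 d' ∨ μ = sig3 d') ∧ μ.degree = t}
        = ∅ := by
      ext μ
      simp only [Set.mem_setOf_eq, Set.mem_empty_iff_false, iff_false, not_and]
      rintro (rfl | rfl | rfl)
      · rw [deg_sig1 d' hd']; omega
      · rw [deg_sig2 d' hd']; omega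
      · rw [deg_sig3 d' hd']; omega
    rw [hset, Set.image_empty, Submodule.span_empty, finrank_bot]

open Stmt3Aux Finsupp in
/-- For `I = (x^{2d'}, y^{2d'}, z^{2d'}, x^{d'}y^{d'}, x z^{2d'−1})` with `d' ≥ 2`:
`I` is `𝔪`-primary and `dim_k Soc(R/I)_t = [t = 4d'−2] + 2·[t = 5d'−4]`. -/
theorem stmt3 {k : Type*} [Field k] (d' : ℕ) (hd' : 2 ≤ d')
    (I : Ideal (MvPolynomial (Fin 3) k))
    (hI : I = Ideal.span
      {X 0 ^ (2 * d'), X 1 ^ (2 * d'), X 2 ^ (2 * d'),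
       X 0 ^ d' * X 1 ^ d', X 0 * X 2 ^ (2 * d' - 1)}) :
    (∃ N : ℕ, 1 ≤ N ∧ (mIdeal k) ^ N ≤ I)
    ∧ (∀ t : ℕ, socDimAt I t =
        (if t = 4 * d' - 2 then 1 else 0) + 2 * (if t = 5 * d' - 4 then 1 else 0)) :=
  stmt3' d' hd' I hI
end

section
/- Let k be a field and S = k[u_{i,j} : 1 ≤ i ≤ 6, 1 ≤ j ≤ 5] the polynomial ring in the entries of the generic 6×5 matrix Θ = (u_{i,j}). Let B be the 5×5 submatrix of Θ formed by its first five rows, let Δ = det B ∈ S, let C be the cofactor matrix of B (so C_{i,j} = (−1)^{i+j} times the determinant of B with row i and column j deleted; C is the transpose of the adjugate of B), and let (Δ_1, Δ_2, Δ_3, Δ_4, Δ_5) = L·C, where L = (u_{6,1},…,u_{6,5}) is the last row of Θ. Then the polynomial 𝔻 = det [[Δ_1, Δ_2, Δ_3], [Δ_2, Δ_4, Δ_5], [Δ_3, Δ_5, −Δ]] is a nonzero element of S. -/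
open MvPolynomial Matrix

/-- The generic 6×5 matrix `Θ = (u_{i,j})` over `S = k[u_{i,j}]`. -/
noncomputable def genericTheta (k : Type*) [Field k] :
    Matrix (Fin 6) (Fin 5) (MvPolynomial (Fin 6 × Fin 5) k) :=
  fun i j => X (i, j)

/-- `B`: the upper 5×5 submatrix of the generic 6×5 matrix. -/
noncomputable def genericB (k : Type*) [Field k] :
    Matrix (Fin 5) (Fin 5) (MvPolynomial (Fin 6 × Fin 5) k) :=
  fun i j => genericTheta k i.castSucc j

/-- The cofactor matrix of `B` (the transpose of the adjugate). -/
noncomputable def genericC (k : Type*) [Field k] :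
    Matrix (Fin 5) (Fin 5) (MvPolynomial (Fin 6 × Fin 5) k) :=
  (genericB k).adjugate.transpose

/-- `(Δ_1, …, Δ_5) = L·C` where `L` is the last row of `Θ`. -/
noncomputable def genericDelta (k : Type*) [Field k] (t : Fin 5) :
    MvPolynomial (Fin 6 × Fin 5) k :=
  ∑ j, genericTheta k (Fin.last 5) j * genericC k j t

/-- Evaluation point: upper 5×5 block is the identity, last row is (1,0,0,1,0). -/
noncomputable def evalPt (k : Type*) [Field k] : Fin 6 × Fin 5 → k :=
  fun p => if (p.1 : ℕ) = (p.2 : ℕ) ∨ ((p.1 : ℕ) = 5 ∧ ((p.2 : ℕ) = 0 ∨ (p.2 : ℕ) = 3))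
    then 1 else 0

lemma evalPt_B (k : Type*) [Field k] :
    (genericB k).map (aeval (evalPt k)) = 1 := by
  ext i j
  fin_cases i <;> fin_cases j <;>
    simp [genericB, genericTheta, evalPt, Matrix.one_apply] <;> decide

lemma evalPt_C (k : Type*) [Field k] :
    (genericC k).map (aeval (evalPt k)) = 1 := by
  have : (genericC k).map (aeval (evalPt k))
      = (((genericB k).map (aeval (evalPt k))).adjugate)ᵀ := by
    rw [genericC, Matrix.transpose_map, ← AlgHom.mapMatrix_apply, AlgHom.map_adjugate,
      AlgHom.mapMatrix_apply]
  rw [this, evalPt_B, Matrix.adjugate_one, Matrix.transpose_one]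

lemma evalPt_Delta (k : Type*) [Field k] (t : Fin 5) :
    aeval (evalPt k) (genericDelta k t) = evalPt k (Fin.last 5, t) := by
  have hC : ∀ i j, aeval (evalPt k) (genericC k i j) = (1 : Matrix (Fin 5) (Fin 5) k) i j := by
    intro i j
    have := congrFun (congrFun (evalPt_C k) i) j
    simpa [Matrix.map_apply] using this
  simp only [genericDelta, map_sum, _root_.map_mul, hC, genericTheta, aeval_X,
    Matrix.one_apply]
  rw [Finset.sum_eq_single t]
  · simp
  · intro b _ hb; simp [hb]
  · simp

/-- The polynomial `𝔻 = det [[Δ₁,Δ₂,Δ₃],[Δ₂,Δ₄,Δ₅],[Δ₃,Δ₅,−Δ]]`, where `Δ = det B`,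
is a nonzero element of `S = k[u_{i,j} : 1 ≤ i ≤ 6, 1 ≤ j ≤ 5]`. -/
theorem stmt4 (k : Type*) [Field k] :
    Matrix.det
      !![genericDelta k 0, genericDelta k 1, genericDelta k 2;
         genericDelta k 1, genericDelta k 3, genericDelta k 4;
         genericDelta k 2, genericDelta k 4, -(genericB k).det] ≠ 0 := by
  intro h
  have h2 := congrArg (aeval (evalPt k)) h
  have hdet : aeval (evalPt k) (genericB k).det = 1 := by
    rw [AlgHom.map_det, AlgHom.mapMatrix_apply, evalPt_B, Matrix.det_one]
  rw [Matrix.det_fin_three] at h2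
  simp only [Matrix.of_apply, Matrix.cons_val', Matrix.cons_val_zero, Matrix.cons_val_one,
    Matrix.head_cons, Matrix.empty_val', Matrix.cons_val_fin_one, Matrix.head_fin_const,
    Matrix.cons_val_two, Matrix.tail_cons] at h2
  simp only [map_add, map_sub, _root_.map_mul, map_neg, map_zero, evalPt_Delta, hdet] at h2
  norm_num [evalPt, Fin.last,
    show ((3 : Fin 5) : ℕ) = 3 from rfl, show ((4 : Fin 5) : ℕ) = 4 from rfl] at h2
end

section
/- Let k be a field, n ≥ 1, R = k[x_1,…,x_n], m ≥ 1 an integer, and let f ∈ R be a homogeneous polynomial every exponent vector α in whose support satisfies α_i ≤ m−1 for all i. Define the socle-like Newton dual of f as f̂ := Σ_{α ∈ supp f} c_α · x^{ν−α}, where c_α is the coefficient of x^α in f and ν = (m−1, m−1, …, m−1). Then for every polynomial h ∈ R: h·f ∈ (x_1^m,…,x_n^m) if and only if for every δ ∈ ℕ^n one has Σ_β b_β · ĉ_{β+δ} = 0, where b_β is the coefficient of x^β in h and ĉ_γ is the coefficient of x^γ in f̂. (Equivalently, the colon ideal (x_1^m,…,x_n^m) : (f) is the annihilator of f̂ under the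 contraction action of R on polynomials, so f̂ is a generator of the Macaulay inverse system of this colon ideal.) -/
open MvPolynomial

/-- Let `f ∈ k[x_1,…,x_n]` be homogeneous with all exponents `≤ m−1`, and let
`f̂ = Σ_α c_α x^{ν−α}` (with `ν = (m−1,…,m−1)`) be its socle-like Newton dual. Then for
every polynomial `h`, one has `h·f ∈ (x_1^m,…,x_n^m)` if and only if for every `δ ∈ ℕ^n`,
`Σ_β b_β·ĉ_{β+δ} = 0` (where `b_β`, `ĉ_γ` are the coefficients of `h`, `f̂`), i.e. iff `h`
annihilates `f̂` under the contraction action: `(x_1^m,…,x_n^m) : (f) = Ann(f̂)`. -/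
theorem stmt13 {k : Type*} [Field k] (n : ℕ) (hn : 1 ≤ n) (m : ℕ) (hm : 1 ≤ m)
    (e : ℕ) (f : MvPolynomial (Fin n) k) (hfhom : f.IsHomogeneous e)
    (hbox : ∀ α ∈ f.support, ∀ i, α i ≤ m - 1)
    (fhat : MvPolynomial (Fin n) k)
    (hfhat : fhat = ∑ α ∈ f.support,
      MvPolynomial.monomial (Finsupp.equivFunOnFinite.symm fun i => m - 1 - α i)
        (MvPolynomial.coeff α f)) :
    ∀ h : MvPolynomial (Fin n) k,
      (h * f ∈ Ideal.span (Set.range fun i : Fin n => (X i : MvPolynomial (Fin n) k) ^ m))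
      ↔ ∀ δ : Fin n →₀ ℕ,
          ∑ β ∈ h.support,
            MvPolynomial.coeff β h * MvPolynomial.coeff (β + δ) fhat = 0 := by
  classical
  intro h
  set ν : Fin n →₀ ℕ := Finsupp.equivFunOnFinite.symm (fun _ => m - 1) with hνdef
  have hνi : ∀ i, ν i = m - 1 := fun i => rfl
  -- coefficients of fhat
  have hcoeff : ∀ τ : Fin n →₀ ℕ,
      coeff τ fhat = if τ ≤ ν then coeff (ν - τ) f else 0 := by
    intro τ
    rw [hfhat, MvPolynomial.coeff_sum]
    simp only [coeff_monomial]
    by_cases hτ : τ ≤ ν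
    · rw [if_pos hτ]
      rw [Finset.sum_eq_single (ν - τ)]
      · rw [if_pos]
        ext i
        have h1 : τ i ≤ m - 1 := (hτ i).trans_eq (hνi i)
        simp [Finsupp.tsub_apply, hνi]
        omega
      · intro α hα hne
        rw [if_neg]
        intro hd
        apply hne
        ext i
        have h1 : α i ≤ m - 1 := hbox α hα i
        have h2 : m - 1 - α i = τ i := by
          have := congrArg (fun g => g i) hd
          simpa using this
        simp [Finsupp.tsub_apply, hνi]
        omega
      · intro hns
        rw [MvPolynomial.notMem_support_iff.mp hns]
        split <;> rfl
    · rw [if_neg hτ]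
      apply Finset.sum_eq_zero
      intro α hα
      rw [if_neg]
      intro hd
      apply hτ
      intro i
      rw [hνi i, ← hd]
      simp
  -- coefficient of product
  have hmul : ∀ γ : Fin n →₀ ℕ, coeff γ (h * f)
      = ∑ β ∈ h.support, if β ≤ γ then coeff β h * coeff (γ - β) f else 0 := by
    intro γ
    conv_lhs => rw [h.as_sum, Finset.sum_mul]
    rw [MvPolynomial.coeff_sum]
    exact Finset.sum_congr rfl fun β _ => by rw [coeff_monomial_mul']
  -- the key sum identity
  have hS : ∀ δ : Fin n →₀ ℕ,
      (∑ β ∈ h.support, coeff β h * coeff (β + δ) fhat)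
        = if δ ≤ ν then coeff (ν - δ) (h * f) else 0 := by
    intro δ
    by_cases hδ : δ ≤ ν
    · rw [if_pos hδ, hmul]
      refine Finset.sum_congr rfl fun β _ => ?_
      rw [hcoeff]
      by_cases hb : β + δ ≤ ν
      · rw [if_pos hb, if_pos ((le_tsub_iff_right hδ).mpr hb)]
        congr 1
        rw [add_comm, tsub_add_eq_tsub_tsub]
      · rw [if_neg hb, if_neg (fun hc => hb ((le_tsub_iff_right hδ).mp hc)), mul_zero]
    · rw [if_neg hδ]
      refine Finset.sum_eq_zero fun β _ => ?_
      rw [hcoeff, if_neg fun hc => hδ (le_trans le_add_self hc), mul_zero]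
  -- rewrite span membership
  have hspan : (Set.range fun i : Fin n => (X i : MvPolynomial (Fin n) k) ^ m)
      = (fun s => monomial s (1 : k)) '' (Set.range fun i : Fin n => Finsupp.single i m) := by
    ext p
    simp only [Set.mem_range, Set.mem_image]
    constructor
    · rintro ⟨i, rfl⟩
      exact ⟨Finsupp.single i m, ⟨i, rfl⟩, (X_pow_eq_monomial (n := i) (e := m)).symm⟩
    · rintro ⟨s, ⟨i, rfl⟩, rfl⟩
      exact ⟨i, X_pow_eq_monomial⟩
  rw [hspan, mem_ideal_span_monomial_image]
  constructor
  · intro H δ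
    rw [hS]
    split
    · rename_i hδ
      by_contra hne
      obtain ⟨si, ⟨i, rfl⟩, hle⟩ := H (ν - δ) (MvPolynomial.mem_support_iff.mpr hne)
      have h1 : m ≤ (ν - δ) i := Finsupp.single_le_iff.mp hle
      have h2 : (ν - δ) i ≤ m - 1 := (tsub_le_self (a := ν) (b := δ) i).trans_eq (hνi i)
      omega
    · rfl
  · intro H γ hγ
    by_contra hc
    push_neg at hc
    have hγν : γ ≤ ν := by
      intro i
      rw [hνi i]
      have := hc (Finsupp.single i m) ⟨i, rfl⟩
      rw [Finsupp.single_le_iff] at this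
      omega
    have h0 := H (ν - γ)
    rw [hS, if_pos tsub_le_self, tsub_tsub_cancel_of_le hγν] at h0
    exact MvPolynomial.mem_support_iff.mp hγ h0
end

section
/- Let k be a field, n ≥ 1, R = k[x_1,…,x_n], and let m, e ≥ 1 be integers such that s := n(m−1) − e is even; set d := s/2 + 1. If m < d, then there is no homogeneous polynomial f of degree e with f ∉ (x_1^m,…,x_n^m) such that the colon ideal (x_1^m,…,x_n^m) : (f) is generated by its degree-d homogeneous component. -/
open MvPolynomial

/-- For `m, e ≥ 1` with `s := n(m−1) − e` even and `d := s/2 + 1`: if `m < d`, then there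
is no homogeneous polynomial `f` of degree `e` with `f ∉ (x_1^m,…,x_n^m)` such that the
colon ideal `(x_1^m,…,x_n^m) : (f)` is generated by its degree-`d` component. -/
theorem stmt16 {k : Type*} [Field k] (n : ℕ) (hn : 1 ≤ n)
    (m e : ℕ) (hm : 1 ≤ m) (he : 1 ≤ e)
    (heven : Even (n * (m - 1) - e))
    (d : ℕ) (hd : d = (n * (m - 1) - e) / 2 + 1) (hmd : m < d) :
    ¬ ∃ (f : MvPolynomial (Fin n) k) (I : Ideal (MvPolynomial (Fin n) k)),
        f.IsHomogeneous e
        ∧ f ∉ Ideal.span (Set.range fun i : Fin n => (X i : MvPolynomial (Fin n) k) ^ m)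
        ∧ I = Submodule.colon
            (Ideal.span (Set.range fun i : Fin n => (X i : MvPolynomial (Fin n) k) ^ m))
            (Ideal.span {f})
        ∧ I = Ideal.span
            ((I.restrictScalars k ⊓ homogeneousSubmodule (Fin n) k d :
              Submodule k _) : Set _) := by
  rintro ⟨f, I, hf, hfJ, hI, hgen⟩
  set J := Ideal.span (Set.range fun i : Fin n => (X i : MvPolynomial (Fin n) k) ^ m) with hJ
  have hx : (X (⟨0, hn⟩ : Fin n) : MvPolynomial (Fin n) k) ^ m ∈ I := by
    rw [hI, Submodule.mem_colon]
    intro p hp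
    exact J.mul_mem_right p (Ideal.subset_span ⟨⟨0, hn⟩, rfl⟩)
  have key : ∀ g ∈ I, ∀ u : Fin n →₀ ℕ, u.degree < d → coeff u g = 0 := by
    intro g hg
    rw [hgen] at hg
    refine Submodule.span_induction ?_ ?_ ?_ ?_ hg
    · rintro s hs u hu
      rw [SetLike.mem_coe, Submodule.mem_inf] at hs
      have hsh : s.IsHomogeneous d := (mem_homogeneousSubmodule d s).mp hs.2
      exact hsh.coeff_eq_zero (by omega)
    · intro u hu; simp
    · intro a b _ _ ha hb u hu
      simp [ha u hu, hb u hu]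
    · intro c g _ hgP u hu
      rw [smul_eq_mul, coeff_mul]
      apply Finset.sum_eq_zero
      rintro ⟨v, w⟩ hvw
      rw [Finset.HasAntidiagonal.mem_antidiagonal] at hvw
      have hdeg : u.degree = v.degree + w.degree := by
        rw [← hvw]
        simp [Finsupp.degree_eq_weight_one, map_add]
      rw [hgP w (by omega), mul_zero]
  have h0 := key _ hx (Finsupp.single ⟨0, hn⟩ m)
    (by
      have : (Finsupp.single (⟨0, hn⟩ : Fin n) m).degree = m := by
        simp [Finsupp.degree_apply, Finsupp.support_single_ne_zero _ (by omega : m ≠ 0)]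
      omega)
  rw [coeff_X_pow] at h0
  simp at h0
end

section
/- Let k be a field, R = k[x_1,…,x_n], and let ℓ_1,…,ℓ_n ∈ R_1 be k-linearly independent linear forms (hence a regular sequence). Let m_1,…,m_n ≥ 1 be integers and f ∈ R a homogeneous polynomial. Then for each 1 ≤ i ≤ n one has the equality of colon ideals (ℓ_1^{m_1},…,ℓ_n^{m_n}) : (f) = (ℓ_1^{m_1},…,ℓ_{i−1}^{m_{i−1}}, ℓ_i^{m_i+1}, ℓ_{i+1}^{m_{i+1}},…,ℓ_n^{m_n}) : (ℓ_i·f). Consequently, for every integer K ≥ 0: (ℓ_1^{m_1},…,ℓ_n^{m_n}) : (f) = (ℓ_1^{m_1+K},…,ℓ_n^{m_n+K}) : ((ℓ_1·ℓ_2⋯ℓ_n)^K·f). -/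
open MvPolynomial

set_option maxHeartbeats 1000000

/-- A surjective ring endomorphism of a Noetherian ring is injective. -/
lemma aux_hopfian {R : Type*} [CommRing R] [IsNoetherianRing R] (φ : R →+* R)
    (hs : Function.Surjective φ) : Function.Injective φ := by
  let F : ℕ → R →+* R := fun m => Nat.rec (RingHom.id R) (fun _ g => φ.comp g) m
  have hFs : ∀ m, Function.Surjective (F m) := by
    intro m; induction m with
    | zero => exact Function.surjective_id
    | succ m ih => exact hs.comp ih
  have hmono : Monotone fun m => RingHom.ker (F m) := by
    apply monotone_nat_of_le_succ
    intro m x hx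
    simp only [RingHom.mem_ker] at hx ⊢
    show φ ((F m) x) = 0
    rw [hx, map_zero]
  obtain ⟨N, hN⟩ := monotone_stabilizes_iff_noetherian.mpr inferInstance
    ⟨fun m => RingHom.ker (F m), hmono⟩
  rw [RingHom.injective_iff_ker_eq_bot, eq_bot_iff]
  intro x hx
  obtain ⟨y, rfl⟩ := hFs N x
  have h1 : y ∈ RingHom.ker (F (N + 1)) := by
    show φ ((F N) y) = 0
    exact hx
  have h2 : y ∈ RingHom.ker (F N) := by
    have := hN (N + 1) (by omega)
    simp only [OrderHom.coe_mk] at this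
    rw [this]; exact h1
  simpa using h2

lemma aux_single {σ : Type*} (d : σ →₀ ℕ) (hd : d.degree = 1) :
    ∃ s, d = Finsupp.single s 1 := by
  classical
  have hne : d.support.Nonempty := by
    rw [Finset.nonempty_iff_ne_empty]
    intro h
    rw [Finsupp.degree_apply] at hd
    simp [h] at hd
  obtain ⟨s, hs⟩ := hne
  refine ⟨s, ?_⟩
  have hds : d s = 1 := by
    have h1 : d s ≤ d.degree := Finsupp.le_degree s d
    have h2 : 1 ≤ d s := Nat.one_le_iff_ne_zero.mpr (Finsupp.mem_support_iff.mp hs)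
    omega
  have herase : ∑ i ∈ d.support.erase s, d i = 0 := by
    have := Finset.add_sum_erase _ d hs
    rw [Finsupp.degree_apply] at hd
    omega
  ext t
  rcases eq_or_ne t s with rfl | hts
  · simp [hds]
  · rw [Finsupp.single_apply, if_neg (fun h => hts h.symm)]
    by_contra h
    have ht : t ∈ d.support.erase s := Finset.mem_erase.mpr ⟨hts, Finsupp.mem_support_iff.mpr h⟩
    exact h (Finset.sum_eq_zero_iff.mp herase t ht)

/-- A homogeneous polynomial of degree 1 lies in the span of the variables. -/
lemma aux_mem_span_X {k : Type*} [CommRing k] {n : ℕ} {p : MvPolynomial (Fin n) k}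
    (hp : p.IsHomogeneous 1) :
    p ∈ Submodule.span k (Set.range (X : Fin n → MvPolynomial (Fin n) k)) := by
  nth_rewrite 1 [p.as_sum]
  apply Submodule.sum_mem
  intro d hd
  have hdeg : d.degree = 1 := by
    have := hp (mem_support_iff.mp hd)
    rwa [Finsupp.degree_eq_weight_one]
  obtain ⟨s, rfl⟩ := aux_single d hdeg
  have hX : monomial (Finsupp.single s 1) (coeff (Finsupp.single s 1) p)
      = coeff (Finsupp.single s 1) p • X s := by
    rw [show (X s : MvPolynomial (Fin n) k) = monomial (Finsupp.single s 1) 1 from rfl,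
      smul_monomial, smul_eq_mul, mul_one]
  rw [hX]
  exact Submodule.smul_mem _ _ (Submodule.subset_span ⟨s, rfl⟩)

/-- Linearly independent linear forms define an automorphism of the polynomial ring. -/
lemma aux_equiv {k : Type*} [Field k] {n : ℕ} (ℓ : Fin n → MvPolynomial (Fin n) k)
    (hhom : ∀ i, (ℓ i).IsHomogeneous 1) (hli : LinearIndependent k ℓ) :
    ∃ e : MvPolynomial (Fin n) k ≃ₐ[k] MvPolynomial (Fin n) k, ∀ j, e (X j) = ℓ j := by
  classical
  have hle : Submodule.span k (Set.range ℓ)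
      ≤ Submodule.span k (Set.range (X : Fin n → MvPolynomial (Fin n) k)) :=
    Submodule.span_le.mpr (by rintro _ ⟨j, rfl⟩; exact aux_mem_span_X (hhom j))
  have hVfd : FiniteDimensional k
      (Submodule.span k (Set.range (X : Fin n → MvPolynomial (Fin n) k))) :=
    FiniteDimensional.span_of_finite k (Set.finite_range _)
  have hfr1 : Module.finrank k (Submodule.span k (Set.range ℓ)) = n := by
    rw [finrank_span_eq_card hli, Fintype.card_fin]
  have hfr2 : Module.finrank k
      (Submodule.span k (Set.range (X : Fin n → MvPolynomial (Fin n) k))) ≤ n := by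
    refine le_trans (finrank_span_le_card (R := k) (Set.range X)) ?_
    rw [Set.toFinset_range]
    exact le_trans (Finset.card_image_le) (by simp)
  have heq : Submodule.span k (Set.range ℓ)
      = Submodule.span k (Set.range (X : Fin n → MvPolynomial (Fin n) k)) :=
    Submodule.eq_of_le_of_finrank_le hle (by omega)
  have hX : ∀ s : Fin n, ∃ c : Fin n → k, (∑ t, c t • ℓ t) = X s := by
    intro s
    have : (X s : MvPolynomial (Fin n) k) ∈ Submodule.span k (Set.range ℓ) := by
      rw [heq]; exact Submodule.subset_span ⟨s, rfl⟩
    exact (Submodule.mem_span_range_iff_exists_fun k).mp this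
  choose c hc using hX
  let φ : MvPolynomial (Fin n) k →ₐ[k] MvPolynomial (Fin n) k := aeval ℓ
  let ψ : MvPolynomial (Fin n) k →ₐ[k] MvPolynomial (Fin n) k :=
    aeval (fun s => ∑ t, C (c s t) * X t)
  have hcomp : φ.comp ψ = AlgHom.id k (MvPolynomial (Fin n) k) := by
    apply algHom_ext
    intro s
    rw [AlgHom.comp_apply, AlgHom.id_apply]
    have h1 : ψ (X s) = ∑ t, C (c s t) * X t := aeval_X _ s
    rw [h1]
    rw [map_sum, ← hc s]
    apply Finset.sum_congr rfl
    intro t _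
    show φ (C (c s t) * X t) = c s t • ℓ t
    rw [map_mul, smul_eq_C_mul]
    rw [show φ (C (c s t)) = C (c s t) by simp [φ, algebraMap_eq],
      show φ (X t) = ℓ t by simp [φ]]
  have hsurj : Function.Surjective φ := fun x =>
    ⟨ψ x, by rw [← AlgHom.comp_apply, hcomp, AlgHom.id_apply]⟩
  have hinj : Function.Injective φ := aux_hopfian φ.toRingHom hsurj
  exact ⟨AlgEquiv.ofBijective φ ⟨hinj, hsurj⟩, fun j => by
    show φ (X j) = ℓ j; simp [φ]⟩

/-- A variable is a nonzerodivisor modulo a monomial ideal in the other variables. -/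
lemma aux_mono {k : Type*} [Field k] {n : ℕ} (e' : Fin n → ℕ) (i : Fin n)
    (g : MvPolynomial (Fin n) k)
    (hg : X i * g ∈ Ideal.span ((fun j => (X j : MvPolynomial (Fin n) k) ^ e' j) '' {j | j ≠ i})) :
    g ∈ Ideal.span ((fun j => (X j : MvPolynomial (Fin n) k) ^ e' j) '' {j | j ≠ i}) := by
  classical
  have hset : ((fun j => (X j : MvPolynomial (Fin n) k) ^ e' j) '' {j | j ≠ i})
      = (fun d => monomial d (1 : k)) '' ((fun j => Finsupp.single j (e' j)) '' {j | j ≠ i}) := by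
    rw [Set.image_image]
    simp [X_pow_eq_monomial]
  rw [hset, mem_ideal_span_monomial_image] at hg ⊢
  intro d hd
  have hmem : Finsupp.single i 1 + d ∈ (X i * g).support := by
    rw [mem_support_iff, coeff_X_mul]
    exact mem_support_iff.mp hd
  obtain ⟨si, hsi, hle⟩ := hg _ hmem
  obtain ⟨j, hj, rfl⟩ := hsi
  refine ⟨_, ⟨j, hj, rfl⟩, ?_⟩
  rw [Finsupp.single_le_iff] at hle ⊢
  rwa [Finsupp.add_apply, Finsupp.single_apply, if_neg (fun h => hj h.symm), zero_add] at hle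

/-- `ℓ i` is a nonzerodivisor modulo the ideal generated by powers of the other forms. -/
lemma aux_reg {k : Type*} [Field k] {n : ℕ} (ℓ : Fin n → MvPolynomial (Fin n) k)
    (hhom : ∀ i, (ℓ i).IsHomogeneous 1) (hli : LinearIndependent k ℓ)
    (e' : Fin n → ℕ) (i : Fin n) (g : MvPolynomial (Fin n) k)
    (hg : ℓ i * g ∈ Ideal.span ((fun j => ℓ j ^ e' j) '' {j | j ≠ i})) :
    g ∈ Ideal.span ((fun j => ℓ j ^ e' j) '' {j | j ≠ i}) := by
  obtain ⟨e, he⟩ := aux_equiv ℓ hhom hli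
  have hmap : Ideal.span ((fun j => ℓ j ^ e' j) '' {j | j ≠ i})
      = Ideal.map (e : MvPolynomial (Fin n) k ≃+* MvPolynomial (Fin n) k)
          (Ideal.span ((fun j => (X j : MvPolynomial (Fin n) k) ^ e' j) '' {j | j ≠ i})) := by
    rw [Ideal.map_span, Set.image_image]
    apply congrArg
    apply Set.image_congr
    intro j _
    simp [map_pow, he j]
  rw [hmap] at hg ⊢
  rw [← Ideal.symm_apply_mem_of_equiv_iff] at hg ⊢
  rw [map_mul] at hg
  have hi : (e : MvPolynomial (Fin n) k ≃+* MvPolynomial (Fin n) k).symm (ℓ i) = X i := by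
    rw [← he i]
    exact e.toRingEquiv.symm_apply_apply _
  rw [hi] at hg
  exact aux_mono e' i _ hg

/-- One step: raising the `i`-th exponent and multiplying by `ℓ i`. -/
lemma aux_key {k : Type*} [Field k] {n : ℕ} (ℓ : Fin n → MvPolynomial (Fin n) k)
    (hhom : ∀ i, (ℓ i).IsHomogeneous 1) (hli : LinearIndependent k ℓ)
    (m : Fin n → ℕ) (f : MvPolynomial (Fin n) k) (i : Fin n) :
    Submodule.colon (Ideal.span (Set.range fun j => ℓ j ^ m j)) (Ideal.span {f})
      = Submodule.colon
          (Ideal.span (Set.range fun j => ℓ j ^ (if j = i then m j + 1 else m j)))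
          (Ideal.span {ℓ i * f}) := by
  ext h
  rw [Ideal.mem_colon_span_singleton, Ideal.mem_colon_span_singleton]
  constructor
  · intro hmem
    obtain ⟨c, hc⟩ := (Submodule.mem_span_range_iff_exists_fun _).mp hmem
    have key : h * (ℓ i * f) = ∑ j, ℓ i * (c j • ℓ j ^ m j) := by
      rw [← Finset.mul_sum, hc]; ring
    rw [key]
    apply Ideal.sum_mem
    intro j _
    rcases eq_or_ne j i with rfl | hne
    · have hh : ℓ j * (c j • ℓ j ^ m j) = c j * ℓ j ^ (if j = j then m j + 1 else m j) := by
        rw [if_pos rfl, smul_eq_mul, pow_succ]; ring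
      rw [hh]
      exact Ideal.mul_mem_left _ _ (Ideal.subset_span ⟨j, rfl⟩)
    · have hh : ℓ i * (c j • ℓ j ^ m j) = (ℓ i * c j) * ℓ j ^ (if j = i then m j + 1 else m j) := by
        rw [if_neg hne, smul_eq_mul]; ring
      rw [hh]
      exact Ideal.mul_mem_left _ _ (Ideal.subset_span ⟨j, rfl⟩)
  · intro hmem
    obtain ⟨c, hc⟩ := (Submodule.mem_span_range_iff_exists_fun _).mp hmem
    have h1 := Finset.add_sum_erase Finset.univ
      (fun j => c j • ℓ j ^ (if j = i then m j + 1 else m j)) (Finset.mem_univ i)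
    rw [hc] at h1
    simp only [eq_self_iff_true, if_true, smul_eq_mul] at h1
    have heq : ℓ i * (h * f - c i * ℓ i ^ m i)
        = ∑ j ∈ Finset.univ.erase i, c j * ℓ j ^ (if j = i then m j + 1 else m j) := by
      linear_combination -h1
    have hJ : ℓ i * (h * f - c i * ℓ i ^ m i)
        ∈ Ideal.span ((fun j => ℓ j ^ m j) '' {j | j ≠ i}) := by
      rw [heq]
      apply Ideal.sum_mem
      intro j hj
      have hji : j ≠ i := (Finset.mem_erase.mp hj).1
      rw [if_neg hji]
      exact Ideal.mul_mem_left _ _ (Ideal.subset_span ⟨j, hji, rfl⟩)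
    have hreg := aux_reg ℓ hhom hli m i _ hJ
    have hJI : Ideal.span ((fun j => ℓ j ^ m j) '' {j | j ≠ i})
        ≤ Ideal.span (Set.range fun j => ℓ j ^ m j) :=
      Ideal.span_mono (by rintro _ ⟨j, _, rfl⟩; exact ⟨j, rfl⟩)
    have hrw : h * f = (h * f - c i * ℓ i ^ m i) + c i * ℓ i ^ m i := by ring
    rw [hrw]
    exact Ideal.add_mem _ (hJI hreg) (Ideal.mul_mem_left _ _ (Ideal.subset_span ⟨i, rfl⟩))

/-- One full round: raising every exponent by one and multiplying by `∏ ℓ j`. -/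
lemma aux_round {k : Type*} [Field k] {n : ℕ} (ℓ : Fin n → MvPolynomial (Fin n) k)
    (hhom : ∀ i, (ℓ i).IsHomogeneous 1) (hli : LinearIndependent k ℓ)
    (m' : Fin n → ℕ) (f' : MvPolynomial (Fin n) k) :
    Submodule.colon (Ideal.span (Set.range fun j => ℓ j ^ m' j)) (Ideal.span {f'})
      = Submodule.colon (Ideal.span (Set.range fun j => ℓ j ^ (m' j + 1)))
          (Ideal.span {(∏ j, ℓ j) * f'}) := by
  classical
  have P : ∀ t : ℕ,
      Submodule.colon (Ideal.span (Set.range fun j => ℓ j ^ m' j)) (Ideal.span {f'})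
        = Submodule.colon
            (Ideal.span (Set.range fun j => ℓ j ^ (m' j + if (j : ℕ) < t then 1 else 0)))
            (Ideal.span {(∏ j ∈ Finset.univ.filter (fun j : Fin n => (j : ℕ) < t), ℓ j) * f'}) := by
    intro t
    induction t with
    | zero => simp
    | succ t ih =>
      rcases lt_or_ge t n with ht | ht
      · set i : Fin n := ⟨t, ht⟩ with hi
        rw [ih, aux_key ℓ hhom hli (fun j => m' j + if (j : ℕ) < t then 1 else 0) _ i]
        have hexp : (fun j => ℓ j ^ (if j = i then (m' j + if (j : ℕ) < t then 1 else 0) + 1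
              else m' j + if (j : ℕ) < t then 1 else 0))
            = fun j => ℓ j ^ (m' j + if (j : ℕ) < t + 1 then 1 else 0) := by
          funext j
          congr 1
          rcases eq_or_ne j i with rfl | hji
          · simp only [if_pos rfl]
            have hit : (i : ℕ) = t := rfl
            split_ifs <;> omega
          · rw [if_neg hji]
            have hjt : (j : ℕ) ≠ t := fun hc => hji (Fin.ext hc)
            split_ifs <;> omega
        have hgen : ℓ i * ((∏ j ∈ Finset.univ.filter (fun j : Fin n => (j : ℕ) < t), ℓ j) * f')
            = (∏ j ∈ Finset.univ.filter (fun j : Fin n => (j : ℕ) < t + 1), ℓ j) * f' := by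
          have hins : Finset.univ.filter (fun j : Fin n => (j : ℕ) < t + 1)
              = insert i (Finset.univ.filter (fun j : Fin n => (j : ℕ) < t)) := by
            ext j
            simp only [Finset.mem_insert, Finset.mem_filter, Finset.mem_univ, true_and]
            constructor
            · intro hj
              rcases eq_or_ne j i with rfl | hji
              · exact Or.inl rfl
              · right
                have : (j : ℕ) ≠ t := fun hc => hji (Fin.ext hc)
                omega
            · rintro (rfl | hj)
              · exact Nat.lt_succ_self t
              · omega
          have hnot : i ∉ Finset.univ.filter (fun j : Fin n => (j : ℕ) < t) := by
            simp [hi]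
          rw [hins, Finset.prod_insert hnot, mul_assoc]
        rw [hexp, hgen]
      · have h1 : (fun j : Fin n => ℓ j ^ (m' j + if (j : ℕ) < t then 1 else 0))
            = fun j => ℓ j ^ (m' j + if (j : ℕ) < t + 1 then 1 else 0) := by
          funext j
          have hj := j.isLt
          rw [if_pos (by omega), if_pos (by omega)]
        have h2 : Finset.univ.filter (fun j : Fin n => (j : ℕ) < t)
            = Finset.univ.filter (fun j : Fin n => (j : ℕ) < t + 1) := by
          ext j
          have hj := j.isLt
          simp only [Finset.mem_filter, Finset.mem_univ, true_and]
          omega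
        rw [ih, h1, h2]
  have hP := P n
  have h1 : (fun j : Fin n => ℓ j ^ (m' j + if (j : ℕ) < n then 1 else 0))
      = fun j => ℓ j ^ (m' j + 1) := by
    funext j
    rw [if_pos j.isLt]
  have h2 : Finset.univ.filter (fun j : Fin n => (j : ℕ) < n) = Finset.univ := by
    ext j
    simp [j.isLt]
  rw [h1, h2] at hP
  exact hP

/-- For linearly independent linear forms `ℓ_1,…,ℓ_n ∈ k[x_1,…,x_n]`, integers
`m_1,…,m_n ≥ 1` and a homogeneous `f`:
`(ℓ_1^{m_1},…,ℓ_n^{m_n}) : (f)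
  = (ℓ_1^{m_1},…,ℓ_i^{m_i+1},…,ℓ_n^{m_n}) : (ℓ_i·f)` for every `i`, and consequently
`(ℓ_1^{m_1},…,ℓ_n^{m_n}) : (f)
  = (ℓ_1^{m_1+K},…,ℓ_n^{m_n+K}) : ((ℓ_1⋯ℓ_n)^K·f)` for every `K ≥ 0`. -/
theorem stmt17 {k : Type*} [Field k] (n : ℕ)
    (ℓ : Fin n → MvPolynomial (Fin n) k)
    (hhom : ∀ i, (ℓ i).IsHomogeneous 1)
    (hli : LinearIndependent k ℓ)
    (m : Fin n → ℕ) (hm : ∀ i, 1 ≤ m i)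
    (f : MvPolynomial (Fin n) k) (hf : ∃ e : ℕ, f.IsHomogeneous e) :
    (∀ i : Fin n,
      Submodule.colon (Ideal.span (Set.range fun j => ℓ j ^ m j)) (Ideal.span {f})
        = Submodule.colon
            (Ideal.span (Set.range fun j => ℓ j ^ (if j = i then m j + 1 else m j)))
            (Ideal.span {ℓ i * f}))
    ∧ ∀ K : ℕ,
      Submodule.colon (Ideal.span (Set.range fun j => ℓ j ^ m j)) (Ideal.span {f})
        = Submodule.colon (Ideal.span (Set.range fun j => ℓ j ^ (m j + K)))
            (Ideal.span {(∏ j, ℓ j) ^ K * f}) := by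
  constructor
  · intro i
    exact aux_key ℓ hhom hli m f i
  · intro K
    induction K with
    | zero => simp
    | succ K ih =>
      have h2 : (∏ j, ℓ j) ^ (K + 1) * f = (∏ j, ℓ j) * ((∏ j, ℓ j) ^ K * f) := by
        rw [pow_succ]; ring
      rw [ih, aux_round ℓ hhom hli (fun j => m j + K) ((∏ j, ℓ j) ^ K * f), h2]
      have h1 : (fun j : Fin n => ℓ j ^ (m j + K + 1))
          = fun j : Fin n => ℓ j ^ (m j + (K + 1)) := by
        funext j
        rw [Nat.add_assoc]
      rw [h1]
end
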